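/- Let 𝒩 be the k-neighborhood graph of a weighted undirected graph G (each vertex keeps edges to its k nearest neighbors). Then for every vertex v, the set of k closest reachable vertices to v in 𝒩 equals the set of k closest reachable vertices to v in G: S_𝒩[k](v) = S_G[k](v), where ties in 𝒩 are broken as in G. -/

import Mathlib

open scoped ENNReal

namespace Stmt14

variable {V : Type*}

/-- Endpoint of a walk starting at `u` with subsequent vertices given by the list. -/
def last : V → List V → V
  | u, [] => u
  | _, x :: xs => last x xs

/-- Weight of a walk starting at `u` with subsequent vertices given by the list. -/
noncomputable def cost (w : V → V → ℝ≥0∞) : V → List V → ℝ≥0∞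
  | _, [] => 0
  | u, x :: xs => w u x + cost w x xs

/-- `h`-hop-limited distance from `u` to `v` (non-edges have weight `⊤`). -/
noncomputable def hdist (w : V → V → ℝ≥0∞) (h : ℕ) (u v : V) : ℝ≥0∞ :=
  ⨅ p ∈ {p : List V | p.length ≤ h ∧ last u p = v}, cost w u p

/-- Shortest-path distance from `u` to `v`. -/
noncomputable def dist (w : V → V → ℝ≥0∞) (u v : V) : ℝ≥0∞ :=
  ⨅ h : ℕ, hdist w h u v

/-- `S` is a set of (at most) `k` closest reachable vertices to `v` (excluding `v`),
with ties broken arbitrarily: members of `S` are reachable and distinct from `v`,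
`|S| ≤ k`, every member is at least as close as every reachable non-member, and `S`
has exactly `k` elements unless it already contains all reachable vertices. -/
def IsKClosest [Fintype V] (w : V → V → ℝ≥0∞) (k : ℕ) (v : V) (S : Finset V) : Prop :=
  (∀ u ∈ S, u ≠ v ∧ dist w v u < ⊤) ∧ S.card ≤ k ∧
  (∀ y ∈ S, ∀ z, z ∉ S → z ≠ v → dist w v z < ⊤ → dist w v y ≤ dist w v z) ∧
  (∀ z, z ∉ S → z ≠ v → dist w v z < ⊤ → S.card = k)

/-- Weight function of the union `G ∪ G^(k)` of the graph with the `k`-shortcut hopset: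
hopset edges `(u,v)` (present when `u ∈ S v` or `v ∈ S u`) get weight `d_G(u,v)`. -/
noncomputable def unionW [Fintype V] [DecidableEq V] (w : V → V → ℝ≥0∞) (S : V → Finset V)
    (u v : V) : ℝ≥0∞ :=
  if u ∈ S v ∨ v ∈ S u then min (w u v) (dist w u v) else w u v


/-- Minimum number of hops of a minimum-weight `u`–`v` path. -/
noncomputable def minHopsD (w : V → V → ℝ≥0∞) (u v : V) : ℕ :=
  sInf {ℓ : ℕ | ∃ p : List V, p.length = ℓ ∧ last u p = v ∧ cost w u p = dist w u v}

/-- Strict comparison of vertices by distance, with ties broken by the tie-breaking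
key `tie` (lexicographically). -/
def keyLt (d : V → ℝ≥0∞) (tie : V → ℕ × ℕ) (y z : V) : Prop :=
  Prod.Lex (· < ·) (Prod.Lex (· < ·) (· < ·)) (d y, tie y) (d z, tie z)

/-- `S` is the set of the `k` closest vertices of `dom` to `v` (excluding `v`) with
respect to the distance function `d`, with ties broken by the key `tie`. -/
def IsKNear (d : V → ℝ≥0∞) (tie : V → ℕ × ℕ) (dom : Finset V) (k : ℕ) (v : V)
    (S : Finset V) : Prop :=
  S ⊆ dom ∧ v ∉ S ∧ S.card ≤ k ∧ (∀ y ∈ S, d y < ⊤) ∧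
  (∀ y ∈ S, ∀ z ∈ dom, z ∉ S → z ≠ v → d z < ⊤ → keyLt d tie y z) ∧
  (∀ z ∈ dom, z ≠ v → d z < ⊤ → z ∉ S → S.card = k)

/-- `nb` assigns to every vertex its `k` nearest neighbors, by edge weight with ties
broken by vertex identifiers `rank` (all neighbors if the degree is less than `k`). -/
def IsKNbhd (w : V → V → ℝ≥0∞) (k : ℕ) (rank : V → ℕ) (nb : V → Finset V) : Prop :=
  ∀ v, (∀ u ∈ nb v, u ≠ v ∧ w v u < ⊤) ∧ (nb v).card ≤ k ∧
    (∀ y ∈ nb v, ∀ z, z ∉ nb v → z ≠ v → w v z < ⊤ →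
      w v y < w v z ∨ (w v y = w v z ∧ rank y < rank z)) ∧
    (∀ z, z ≠ v → w v z < ⊤ → z ∉ nb v → (nb v).card = k)

/-- Weight function of the `k`-neighborhood graph `𝒩`: the edge `(u,v)` is kept iff
`v` is among the `k` nearest neighbors of `u` or vice versa. -/
noncomputable def nbhdW [DecidableEq V] (w : V → V → ℝ≥0∞) (nb : V → Finset V)
    (u v : V) : ℝ≥0∞ :=
  if v ∈ nb u ∨ u ∈ nb v then w u v else ⊤

/-! ### Auxiliary lemmas -/

section Aux

theorem last_cons (u x : V) (xs : List V) : last u (x :: xs) = last x xs := rfl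

theorem cost_cons (w : V → V → ℝ≥0∞) (u x : V) (xs : List V) :
    cost w u (x :: xs) = w u x + cost w x xs := rfl

theorem last_append (u : V) (p q : List V) :
    last u (p ++ q) = last (last u p) q := by
  induction p generalizing u with
  | nil => rfl
  | cons x xs ih => simpa [last_cons] using ih x

theorem cost_append (w : V → V → ℝ≥0∞) (u : V) (p q : List V) :
    cost w u (p ++ q) = cost w u p + cost w (last u p) q := by
  induction p generalizing u with
  | nil => simp [cost, last]
  | cons x xs ih => simp [cost_cons, last_cons, ih x, add_assoc]

theorem cost_mono {w w' : V → V → ℝ≥0∞} (h : ∀ a b, w a b ≤ w' a b) (u : V) (p : List V) :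
    cost w u p ≤ cost w' u p := by
  induction p generalizing u with
  | nil => exact le_rfl
  | cons x xs ih => exact add_le_add (h u x) (ih x)

theorem dist_le_cost (w : V → V → ℝ≥0∞) {u v : V} {p : List V} (h : last u p = v) :
    dist w u v ≤ cost w u p := by
  refine (iInf_le _ p.length).trans ?_
  exact iInf₂_le p ⟨le_rfl, h⟩

theorem dist_self (w : V → V → ℝ≥0∞) (v : V) : dist w v v = 0 := by
  simpa [cost] using dist_le_cost w (u := v) (v := v) (p := []) rfl

theorem dist_mono {w w' : V → V → ℝ≥0∞} (h : ∀ a b, w a b ≤ w' a b) (u v : V) :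
    dist w u v ≤ dist w' u v := by
  refine le_iInf fun n => (iInf_le _ n).trans ?_
  refine le_iInf₂ fun p hp => (iInf₂_le p hp).trans (cost_mono h u p)

theorem dist_triangle_edge (w : V → V → ℝ≥0∞) (u x z : V) :
    dist w u z ≤ dist w u x + w x z := by
  conv_rhs => rw [dist, ENNReal.iInf_add]
  refine le_iInf fun h => ?_
  conv_rhs => rw [hdist, ENNReal.iInf_add]
  refine le_iInf fun p => ?_
  rw [ENNReal.iInf_add]
  refine le_iInf fun hp => ?_
  calc dist w u z ≤ cost w u (p ++ [z]) := by
        refine dist_le_cost w ?_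
        rw [last_append, hp.2]; rfl
    _ = cost w u p + w (last u p) z + 0 := by rw [cost_append]; simp [cost]
    _ = cost w u p + w x z := by rw [hp.2, add_zero]

theorem exists_nodup_path (w : V → V → ℝ≥0∞) (p : List V) (u : V) :
    ∃ q : List V, (u :: q).Nodup ∧ last u q = last u p ∧ cost w u q ≤ cost w u p := by
  induction p generalizing u with
  | nil => exact ⟨[], by simp, rfl, le_rfl⟩
  | cons x xs ih =>
    obtain ⟨q', hnd, hlast, hcost⟩ := ih x
    by_cases hu : u ∈ x :: q'
    · obtain ⟨r₁, r₂, hsplit⟩ := List.append_of_mem hu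
      refine ⟨r₂, ?_, ?_, ?_⟩
      · exact List.Nodup.sublist (by rw [hsplit]; exact List.sublist_append_right _ _) hnd
      · have h1 : last u (x :: q') = last x xs := by rw [last_cons, hlast]
        have h2 : last u (x :: q') = last u r₂ := by
          rw [hsplit, last_append]; rfl
        rw [← h2, h1, last_cons]
      · have h3 : cost w u r₂ ≤ cost w u (x :: q') := by
          rw [hsplit, cost_append, cost_cons]
          calc cost w u r₂ ≤ w (last u r₁) u + cost w u r₂ := le_add_self
            _ ≤ cost w u r₁ + (w (last u r₁) u + cost w u r₂) := le_add_self
        refine h3.trans ?_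
        rw [cost_cons, cost_cons]
        exact add_le_add le_rfl hcost
    · refine ⟨x :: q', List.nodup_cons.mpr ⟨hu, hnd⟩, ?_, ?_⟩
      · rw [last_cons, last_cons, hlast]
      · rw [cost_cons, cost_cons]
        exact add_le_add le_rfl hcost

theorem dist_eq_hdist_card [Fintype V] (w : V → V → ℝ≥0∞) (u v : V) :
    dist w u v = hdist w (Fintype.card V) u v := by
  refine le_antisymm (iInf_le _ _) ?_
  refine le_iInf fun h => le_iInf₂ fun p hp => ?_
  obtain ⟨q, hnd, hlast, hcost⟩ := exists_nodup_path w p u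
  refine (iInf₂_le q ⟨?_, by rw [hlast, hp.2]⟩).trans hcost
  have := hnd.length_le_card
  simp only [List.length_cons] at this
  omega

theorem exists_min_path [Fintype V] (w : V → V → ℝ≥0∞) {u v : V} (h : dist w u v ≠ ⊤) :
    ∃ p : List V, last u p = v ∧ cost w u p = dist w u v := by
  rw [dist_eq_hdist_card] at h ⊢
  set S : Set (List V) := {p : List V | p.length ≤ Fintype.card V ∧ last u p = v} with hS
  have hfin : S.Finite := (List.finite_length_le V (Fintype.card V)).subset fun p hp => hp.1
  have heq : hdist w (Fintype.card V) u v = sInf (cost w u '' S) := by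
    rw [hdist, sInf_image]
  have hne : (cost w u '' S).Nonempty := by
    by_contra hemp
    rw [Set.not_nonempty_iff_eq_empty] at hemp
    rw [heq, hemp, sInf_empty] at h
    exact h rfl
  have hmem := Set.Nonempty.csInf_mem hne (hfin.image _)
  rw [← heq] at hmem
  obtain ⟨p, hp, hcost⟩ := hmem
  exact ⟨p, hp.2, hcost⟩

theorem exists_minHops_path [Fintype V] (w : V → V → ℝ≥0∞) {u v : V} (h : dist w u v ≠ ⊤) :
    ∃ p : List V, p.length = minHopsD w u v ∧ last u p = v ∧ cost w u p = dist w u v := by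
  obtain ⟨p, hlast, hcost⟩ := exists_min_path w h
  have : minHopsD w u v ∈ {ℓ : ℕ | ∃ p : List V, p.length = ℓ ∧ last u p = v ∧
      cost w u p = dist w u v} := Nat.sInf_mem ⟨p.length, p, rfl, hlast, hcost⟩
  obtain ⟨q, hq⟩ := this
  exact ⟨q, hq⟩

theorem minHopsD_le {w : V → V → ℝ≥0∞} {u v : V} {p : List V} (hlast : last u p = v)
    (hcost : cost w u p = dist w u v) : minHopsD w u v ≤ p.length :=
  Nat.sInf_le ⟨p, rfl, hlast, hcost⟩

theorem keyLt_iff (d : V → ℝ≥0∞) (tie : V → ℕ × ℕ) (y z : V) :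
    keyLt d tie y z ↔ d y < d z ∨ (d y = d z ∧ ((tie y).1 < (tie z).1 ∨
      ((tie y).1 = (tie z).1 ∧ (tie y).2 < (tie z).2))) := by
  simp [keyLt, Prod.lex_def]

theorem keyLt_asymm {d : V → ℝ≥0∞} {tie : V → ℕ × ℕ} {y z : V}
    (h1 : keyLt d tie y z) (h2 : keyLt d tie z y) : False := by
  rw [keyLt_iff] at h1 h2
  rcases h1 with h1 | ⟨e1, h1⟩ <;> rcases h2 with h2 | ⟨e2, h2⟩
  · exact absurd h2 (lt_asymm h1)
  · exact absurd h1 (e2 ▸ lt_irrefl _)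
  · exact absurd h2 (e1 ▸ lt_irrefl _)
  · omega

theorem isKNear_unique {d : V → ℝ≥0∞} {tie : V → ℕ × ℕ} {dom : Finset V} {k : ℕ} {v : V}
    {S S' : Finset V} (h : IsKNear d tie dom k v S) (h' : IsKNear d tie dom k v S') :
    S = S' := by
  obtain ⟨hdom, hv, hcard, hfin, hlt, hfull⟩ := h
  obtain ⟨hdom', hv', hcard', hfin', hlt', hfull'⟩ := h'
  have hdisj : ∀ y ∈ S, y ∉ S' → ∀ z ∈ S', z ∉ S → False := by
    intro y hy hy' z hz hz'
    exact keyLt_asymm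
      (hlt y hy z (hdom' hz) hz' (fun e => hv' (e ▸ hz)) (hfin' z hz))
      (hlt' z hz y (hdom hy) hy' (fun e => hv (e ▸ hy)) (hfin y hy))
  by_cases hSS : S ⊆ S'
  · by_cases hSS' : S' ⊆ S
    · exact Finset.Subset.antisymm hSS hSS'
    · obtain ⟨z, hz, hz'⟩ := Finset.not_subset.mp hSS'
      have hk : S.card = k :=
        hfull z (hdom' hz) (fun e => hv' (e ▸ hz)) (hfin' z hz) hz'
      exact Finset.eq_of_subset_of_card_le hSS (hcard'.trans_eq hk.symm)
  · obtain ⟨y, hy, hy'⟩ := Finset.not_subset.mp hSS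
    have hS'S : S' ⊆ S := by
      intro z hz
      by_contra hz'
      exact hdisj y hy hy' z hz hz'
    have hk : S'.card = k :=
      hfull' y (hdom hy) (fun e => hv (e ▸ hy)) (hfin y hy) hy'
    exact (Finset.eq_of_subset_of_card_le hS'S (hcard.trans_eq hk.symm)).symm

theorem minHopsD_le_succ [Fintype V] (w : V → V → ℝ≥0∞) {v x y : V}
    (hx : dist w v x ≠ ⊤) (h : dist w v y = dist w v x + w x y) :
    minHopsD w v y ≤ minHopsD w v x + 1 := by
  obtain ⟨p, hlen, hlast, hcost⟩ := exists_minHops_path w hx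
  have h1 : last v (p ++ [y]) = y := by rw [last_append]; rfl
  have h2 : cost w v (p ++ [y]) = dist w v y := by
    rw [cost_append, hcost, hlast, h]
    simp [cost]
  simpa [hlen] using minHopsD_le h1 h2

theorem exists_pred [Fintype V] (w : V → V → ℝ≥0∞) {v u : V} (hne : u ≠ v)
    (hfin : dist w v u ≠ ⊤) :
    ∃ x : V, x ≠ u ∧ w x u ≠ ⊤ ∧ dist w v x + w x u = dist w v u ∧
      dist w v x ≠ ⊤ ∧ minHopsD w v x + 1 ≤ minHopsD w v u := by
  obtain ⟨p, hlen, hlast, hcost⟩ := exists_minHops_path w hfin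
  rcases List.eq_nil_or_concat p with rfl | ⟨q, b, rfl⟩
  · exact absurd hlast.symm hne
  rw [List.concat_eq_append] at hlen hlast hcost
  set x := last v q with hx
  have hlb : last v (q ++ [b]) = b := by rw [last_append]; rfl
  have hbu : b = u := by rw [← hlb, hlast]
  rw [hbu] at hlen hcost
  have hcq : cost w v (q ++ [u]) = cost w v q + w x u := by
    rw [cost_append, ← hx]; simp [cost]
  rw [hcq] at hcost
  have hwxu : w x u ≠ ⊤ := by
    intro h
    rw [h, add_top] at hcost
    exact hfin hcost.symm
  have hcqfin : cost w v q ≠ ⊤ := by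
    intro h
    rw [h, top_add] at hcost
    exact hfin hcost.symm
  have hdlc : dist w v x ≤ cost w v q := dist_le_cost w rfl
  have hdge : dist w v u ≤ dist w v x + w x u := dist_triangle_edge w v x u
  have hdeq : dist w v x + w x u = dist w v u :=
    le_antisymm (by rw [← hcost]; exact add_le_add hdlc le_rfl) hdge
  have hcqeq : cost w v q = dist w v x := by
    refine (WithTop.add_right_cancel hwxu ?_).symm
    exact hdeq.trans hcost.symm
  have hxfin : dist w v x ≠ ⊤ := hcqeq ▸ hcqfin
  have hhopx : minHopsD w v x ≤ q.length := minHopsD_le rfl hcqeq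
  have hxu : x ≠ u := by
    rintro rfl
    have : minHopsD w v x ≤ q.length := hhopx
    have hlenq : q.length + 1 = minHopsD w v x := by simpa using hlen
    omega
  have hlenq : q.length + 1 = minHopsD w v u := by simpa using hlen
  exact ⟨x, hxu, hwxu, hdeq, hxfin, by omega⟩

end Aux

/-- The `k` closest reachable vertices to `v` in the `k`-neighborhood graph `𝒩`
coincide with the `k` closest reachable vertices to `v` in `G` (ties in `𝒩` broken
as in `G`). -/
theorem knear_in_neighborhood_graph_eq [Fintype V] [DecidableEq V]
    (w : V → V → ℝ≥0∞) (hsymm : ∀ u v, w u v = w v u)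
    (k : ℕ) (hk : 1 ≤ k)
    (rank : V → ℕ) (hrank : Function.Injective rank)
    (nb : V → Finset V) (hnb : IsKNbhd w k rank nb)
    (v : V) (S₁ S₂ : Finset V)
    (hS₁ : IsKNear (dist (nbhdW w nb) v) (fun x => (minHopsD w v x, rank x))
      Finset.univ k v S₁)
    (hS₂ : IsKNear (dist w v) (fun x => (minHopsD w v x, rank x))
      Finset.univ k v S₂) :
    S₁ = S₂ := by
  have hle : ∀ u, dist w v u ≤ dist (nbhdW w nb) v u := by
    intro u
    refine dist_mono (fun a b => ?_) v u
    rw [nbhdW]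
    split_ifs
    · exact le_rfl
    · exact le_top
  obtain ⟨hdom₂, hv₂, hcard₂, hfin₂, hlt₂, hfull₂⟩ := hS₂
  have hmemS₂ : ∀ u ∈ S₂, ∀ z, z ≠ v → dist w v z ≠ ⊤ →
      keyLt (dist w v) (fun x => (minHopsD w v x, rank x)) z u → z ∈ S₂ := by
    intro u hu z hzv hzfin hkey
    by_contra hz
    exact keyLt_asymm hkey
      (hlt₂ u hu z (Finset.mem_univ z) hz hzv (lt_top_iff_ne_top.mpr hzfin))
  have key : ∀ n : ℕ, ∀ u, u ∈ S₂ → minHopsD w v u = n →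
      dist (nbhdW w nb) v u ≤ dist w v u := by
    intro n
    induction n using Nat.strong_induction_on with
    | _ n ih =>
    intro u huS hn
    have hufin : dist w v u ≠ ⊤ := (hfin₂ u huS).ne
    have hunv : u ≠ v := fun e => hv₂ (e ▸ huS)
    obtain ⟨x, hxu, hwxu, hdx, hdxfin, hhops⟩ := exists_pred w hunv hufin
    have hdxu : dist w v x ≤ dist w v u := by rw [← hdx]; exact le_self_add
    have hkeyxu : keyLt (dist w v) (fun x => (minHopsD w v x, rank x)) x u := by
      rw [keyLt_iff]
      rcases lt_or_eq_of_le hdxu with h | h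
      · exact Or.inl h
      · refine Or.inr ⟨h, Or.inl ?_⟩
        show minHopsD w v x < minHopsD w v u
        omega
    have hxvS : x = v ∨ x ∈ S₂ := by
      rcases eq_or_ne x v with h | h
      · exact Or.inl h
      · exact Or.inr (hmemS₂ u huS x h hdxfin hkeyxu)
    have hwxult : w x u < ⊤ := lt_top_iff_ne_top.mpr hwxu
    have hunb : u ∈ nb x := by
      by_contra hun
      obtain ⟨hmem, hcardle, hcmp, hfull⟩ := hnb x
      have hcard : (nb x).card = k := hfull u (Ne.symm hxu) hwxult hun
      have hyS : ∀ y ∈ nb x, y ≠ v → y ∈ S₂ := by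
        intro y hy hyv
        have hyu : y ≠ u := fun e => hun (e ▸ hy)
        have htri : dist w v y ≤ dist w v x + w x y := dist_triangle_edge w v x y
        have hklt : keyLt (dist w v) (fun x => (minHopsD w v x, rank x)) y u ∧
            dist w v y ≠ ⊤ := by
          rcases hcmp y hy u hun (Ne.symm hxu) hwxult with hltw | ⟨heqw, hrk⟩
          · have h1 : dist w v y < dist w v u := by
              rw [← hdx]
              exact htri.trans_lt (ENNReal.add_lt_add_left hdxfin hltw)
            exact ⟨(keyLt_iff _ _ _ _).mpr (Or.inl h1),
              (h1.trans (lt_top_iff_ne_top.mpr hufin)).ne⟩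
          · have h1 : dist w v y ≤ dist w v u := by rw [← hdx, ← heqw]; exact htri
            rcases lt_or_eq_of_le h1 with h2 | h2
            · exact ⟨(keyLt_iff _ _ _ _).mpr (Or.inl h2),
                (h2.trans (lt_top_iff_ne_top.mpr hufin)).ne⟩
            · have h3 : dist w v y = dist w v x + w x y := by rw [h2, ← hdx, heqw]
              have h4 : minHopsD w v y ≤ minHopsD w v u :=
                (minHopsD_le_succ w hdxfin h3).trans hhops
              refine ⟨(keyLt_iff _ _ _ _).mpr (Or.inr ⟨h2, ?_⟩), h2 ▸ hufin⟩
              show minHopsD w v y < minHopsD w v u ∨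
                (minHopsD w v y = minHopsD w v u ∧ rank y < rank u)
              rcases lt_or_eq_of_le h4 with h5 | h5
              · exact Or.inl h5
              · exact Or.inr ⟨h5, hrk⟩
        exact hmemS₂ u huS y hyv hklt.2 hklt.1
      have hcontra : ∀ B : Finset V, B ⊆ S₂ → u ∉ B → k ≤ B.card → False := by
        intro B hBsub huB hBcard
        have h6 : insert u B ⊆ S₂ := Finset.insert_subset huS hBsub
        have h7 := Finset.card_insert_of_notMem huB
        have h8 := Finset.card_le_card h6
        omega
      rcases hxvS with rfl | hxS
      · exact hcontra (nb x) (fun y hy => hyS y hy (hmem y hy).1) hun (le_of_eq hcard.symm)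
      · refine hcontra (insert x ((nb x).erase v)) ?_ ?_ ?_
        · refine Finset.insert_subset hxS fun y hy => ?_
          exact hyS y (Finset.mem_of_mem_erase hy) (Finset.ne_of_mem_erase hy)
        · intro hmem'
          rcases Finset.mem_insert.mp hmem' with h | h
          · exact hxu h.symm
          · exact hun (Finset.mem_of_mem_erase h)
        · have hx9 : x ∉ (nb x).erase v := fun h =>
            (hmem x (Finset.mem_of_mem_erase h)).1 rfl
          have h10 := Finset.card_insert_of_notMem hx9
          have h11 : (nb x).card - 1 ≤ ((nb x).erase v).card :=
            Finset.pred_card_le_card_erase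
          omega
    have hdN : dist (nbhdW w nb) v x ≤ dist w v x := by
      rcases hxvS with rfl | hxS
      · simp [dist_self]
      · exact ih (minHopsD w v x) (by omega) x hxS rfl
    calc dist (nbhdW w nb) v u ≤ dist (nbhdW w nb) v x + nbhdW w nb x u :=
          dist_triangle_edge _ v x u
      _ ≤ dist w v x + w x u := by
          refine add_le_add hdN ?_
          rw [nbhdW, if_pos (Or.inl hunb)]
      _ = dist w v u := hdx
  have hdeq : ∀ u ∈ S₂, dist (nbhdW w nb) v u = dist w v u :=
    fun u hu => le_antisymm (key _ u hu rfl) (hle u)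
  have hS₂' : IsKNear (dist (nbhdW w nb) v) (fun x => (minHopsD w v x, rank x))
      Finset.univ k v S₂ := by
    refine ⟨Finset.subset_univ _, hv₂, hcard₂, ?_, ?_, ?_⟩
    · intro y hy
      rw [hdeq y hy]
      exact hfin₂ y hy
    · intro y hy z hzdom hz hzv hzfin
      have hz2 : dist w v z < ⊤ := (hle z).trans_lt hzfin
      have h2 := hlt₂ y hy z hzdom hz hzv hz2
      rw [keyLt_iff] at h2 ⊢
      have hy1 : dist (nbhdW w nb) v y = dist w v y := hdeq y hy
      rcases h2 with h2 | ⟨h2, h3⟩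
      · exact Or.inl (by rw [hy1]; exact h2.trans_le (hle z))
      · rcases lt_or_eq_of_le (show dist (nbhdW w nb) v y ≤ dist (nbhdW w nb) v z by
          rw [hy1, h2]; exact hle z) with h4 | h4
        · exact Or.inl h4
        · exact Or.inr ⟨h4, h3⟩
    · intro z hzdom hzv hzfin hz
      exact hfull₂ z hzdom hzv ((hle z).trans_lt hzfin) hz
  exact isKNear_unique hS₁ hS₂'

end Stmt14
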